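/- Let n ≥ 1, let e ∈ ℝⁿ be the all-ones vector, and let X = [−100, 100]ⁿ ⊆ ℝⁿ. For each K ∈ ℕ let a_K ∈ [0, 1] and let x_K ∈ X be a global minimizer over X of the function x ↦ ‖x‖⁴ + ‖a_K x − e‖⁴ (Euclidean norm). Then no subsequence of (x_K) converges to e; in particular, (x_K) does not converge to the point e (the unique optimal upper-level solution of the underlying bilevel problem). -/

import Mathlib

open Filter Topology Set

theorem stmt13 {n : ℕ} (hn : 1 ≤ n)
    (e : EuclideanSpace ℝ (Fin n)) (he : ∀ i, e i = 1)
    (X : Set (EuclideanSpace ℝ (Fin n)))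
    (hX : X = {x : EuclideanSpace ℝ (Fin n) | ∀ i, x i ∈ Icc (-100 : ℝ) 100})
    (a : ℕ → ℝ) (ha : ∀ K, a K ∈ Icc (0 : ℝ) 1)
    (xK : ℕ → EuclideanSpace ℝ (Fin n)) (hxX : ∀ K, xK K ∈ X)
    (hxmin : ∀ K, ∀ x ∈ X,
      ‖xK K‖ ^ 4 + ‖a K • xK K - e‖ ^ 4 ≤ ‖x‖ ^ 4 + ‖a K • x - e‖ ^ 4) :
    (∀ ι : ℕ → ℕ, StrictMono ι → ¬ Tendsto (fun K => xK (ι K)) atTop (𝓝 e)) ∧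
    ¬ Tendsto xK atTop (𝓝 e) := by
  have main : ∀ ι : ℕ → ℕ, StrictMono ι → ¬ Tendsto (fun K => xK (ι K)) atTop (𝓝 e) := by
    intro ι hι hconv
    set N : ℝ := ‖e‖ with hNdef
    have he0 : e ≠ 0 := by
      intro h
      have h1 := he ⟨0, hn⟩
      rw [h] at h1
      simp at h1
    have hN : 0 < N := norm_pos_iff.mpr he0
    -- comparison points
    have h0X : (0 : EuclideanSpace ℝ (Fin n)) ∈ X := by
      rw [hX]; intro i
      simp only [Set.mem_Icc]
      constructor <;> norm_num
    have hhX : ((1/2 : ℝ) • e) ∈ X := by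
      rw [hX]; intro i
      have : ((1/2 : ℝ) • e) i = (1/2 : ℝ) * e i := rfl
      rw [this, he i]
      constructor <;> norm_num
    set y : ℕ → EuclideanSpace ℝ (Fin n) := fun K => xK (ι K) with hy
    set b : ℕ → ℝ := fun K => a (ι K) with hbdef
    set u : ℕ → ℝ := fun K => ‖y K‖ with hu
    set v : ℕ → ℝ := fun K => ‖b K • y K - e‖ with hv
    have hb01 : ∀ K, b K ∈ Icc (0:ℝ) 1 := fun K => ha (ι K)
    have hueq : Tendsto u atTop (𝓝 N) := hconv.norm
    have hu4 : Tendsto (fun K => u K ^ 4) atTop (𝓝 (N ^ 4)) := hueq.pow 4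
    -- compare with 0
    have hineq0 : ∀ K, u K ^ 4 + v K ^ 4 ≤ N ^ 4 := by
      intro K
      have h := hxmin (ι K) 0 h0X
      simpa using h
    -- v^4 → 0
    have hv4 : Tendsto (fun K => v K ^ 4) atTop (𝓝 0) := by
      have hsq : Tendsto (fun K => N ^ 4 - u K ^ 4) atTop (𝓝 0) := by
        have h := (tendsto_const_nhds : Tendsto (fun _ : ℕ => N ^ 4) atTop (𝓝 (N ^ 4))).sub hu4
        simpa using h
      refine squeeze_zero (fun K => pow_nonneg (norm_nonneg _) 4) (fun K => ?_) hsq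
      have := hineq0 K
      linarith
    -- v → 0
    have hvz : Tendsto v atTop (𝓝 0) := by
      have hrepr : ∀ K, v K = Real.sqrt (Real.sqrt (v K ^ 4)) := by
        intro K
        rw [show v K ^ 4 = (v K ^ 2) ^ 2 by ring, Real.sqrt_sq (sq_nonneg _),
          Real.sqrt_sq (norm_nonneg _)]
      have h1 := (Real.continuous_sqrt.tendsto 0).comp hv4
      rw [Real.sqrt_zero] at h1
      have h2 := (Real.continuous_sqrt.tendsto 0).comp h1
      rw [Real.sqrt_zero] at h2
      exact h2.congr (fun K => (hrepr K).symm)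
    -- ‖y K - e‖ → 0
    have hye : Tendsto (fun K => ‖y K - e‖) atTop (𝓝 0) :=
      tendsto_iff_norm_sub_tendsto_zero.mp hconv
    -- b → 1
    have hb1 : Tendsto b atTop (𝓝 1) := by
      rw [tendsto_iff_norm_sub_tendsto_zero]
      have hbound : ∀ K, ‖b K - 1‖ ≤ (‖y K - e‖ + v K) / N := by
        intro K
        rw [le_div_iff₀ hN]
        have h1 : ‖b K - 1‖ * N = ‖b K • e - e‖ := by
          rw [show b K • e - e = (b K - 1) • e by rw [sub_smul, one_smul]]
          rw [norm_smul]
        rw [h1]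
        have h2 : ‖b K • e - e‖ ≤ ‖b K • e - b K • y K‖ + ‖b K • y K - e‖ :=
          norm_sub_le_norm_sub_add_norm_sub _ _ _
        have h3 : ‖b K • e - b K • y K‖ = ‖b K‖ * ‖e - y K‖ := by
          rw [← smul_sub, norm_smul]
        have h4 : ‖b K‖ ≤ 1 := by
          rw [Real.norm_eq_abs, abs_le]
          have := hb01 K
          constructor <;> [linarith [this.1]; exact this.2]
        have h5 : ‖e - y K‖ = ‖y K - e‖ := norm_sub_rev _ _
        have h6 : ‖b K‖ * ‖e - y K‖ ≤ ‖y K - e‖ := by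
          rw [h5]
          calc ‖b K‖ * ‖y K - e‖ ≤ 1 * ‖y K - e‖ :=
                mul_le_mul_of_nonneg_right h4 (norm_nonneg _)
            _ = ‖y K - e‖ := one_mul _
        linarith
      refine squeeze_zero (fun K => norm_nonneg _) hbound ?_
      have := (hye.add hvz).div_const N
      simpa using this
    -- compare with e/2
    have hfin : ∀ K, u K ^ 4 ≤ ((1/2) * N) ^ 4 + (|b K * (1/2) - 1| * N) ^ 4 := by
      intro K
      have h := hxmin (ι K) ((1/2 : ℝ) • e) hhX
      have h1 : ‖(1/2 : ℝ) • e‖ = (1/2) * N := by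
        rw [norm_smul]; norm_num; exact hNdef.symm
      have h2 : ‖b K • ((1/2 : ℝ) • e) - e‖ = |b K * (1/2) - 1| * N := by
        rw [smul_smul,
          show (b K * (1/2)) • e - e = (b K * (1/2) - 1) • e by rw [sub_smul, one_smul],
          norm_smul, Real.norm_eq_abs]
      calc u K ^ 4 ≤ u K ^ 4 + v K ^ 4 :=
            le_add_of_nonneg_right (pow_nonneg (norm_nonneg _) 4)
        _ ≤ ‖(1/2 : ℝ) • e‖ ^ 4 + ‖b K • ((1/2 : ℝ) • e) - e‖ ^ 4 := h
        _ = ((1/2) * N) ^ 4 + (|b K * (1/2) - 1| * N) ^ 4 := by rw [h1, h2]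
    -- limit of RHS
    have hRHS : Tendsto (fun K => ((1/2) * N) ^ 4 + (|b K * (1/2) - 1| * N) ^ 4)
        atTop (𝓝 (((1/2) * N) ^ 4 + (|(1:ℝ) * (1/2) - 1| * N) ^ 4)) := by
      have hg : Continuous (fun t : ℝ => ((1/2) * N) ^ 4 + (|t * (1/2) - 1| * N) ^ 4) := by
        fun_prop
      exact (hg.tendsto 1).comp hb1
    have hle : N ^ 4 ≤ ((1/2) * N) ^ 4 + (|(1:ℝ) * (1/2) - 1| * N) ^ 4 :=
      le_of_tendsto_of_tendsto' hu4 hRHS hfin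
    have habs : |(1:ℝ) * (1/2) - 1| = (1/2 : ℝ) := by norm_num
    rw [habs] at hle
    nlinarith [pow_pos hN 4, hle]
  exact ⟨main, fun h => main id strictMono_id h⟩
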